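/- The linearization of the system at the fixed point K₊ = (1,0) has eigenvalues 3(2-γ) and √6(√6-λ). In particular K₊ is an unstable node (both eigenvalues positive) when 0 ≤ λ < √6 and γ ∈ (0,2), and a saddle when λ > √6. -/

import Mathlib

/-- The `Σ`-component of the vector field. -/
noncomputable def fS (lam gam s w : ℝ) : ℝ :=
  -(2 - (-1 + 3 * s ^ 2 + 3 / 2 * gam * w)) * s + Real.sqrt (3 / 2) * lam * (1 - s ^ 2 - w)

/-- The `Ω`-component of the vector field. -/
noncomputable def fO (gam s w : ℝ) : ℝ :=
  (2 * (1 + (-1 + 3 * s ^ 2 + 3 / 2 * gam * w)) - 3 * gam) * w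

/-- The Jacobian matrix of the vector field at `(s,w)`. -/
noncomputable def Jac (lam gam s w : ℝ) : Matrix (Fin 2) (Fin 2) ℝ :=
  !![deriv (fun x => fS lam gam x w) s, deriv (fun y => fS lam gam s y) w;
     deriv (fun x => fO gam x w) s, deriv (fun y => fO gam s y) w]

lemma sqrt6_eq : Real.sqrt 6 = 2 * Real.sqrt (3/2) := by
  rw [show (6:ℝ) = 2^2*(3/2) by norm_num, Real.sqrt_mul (by positivity), Real.sqrt_sq (by norm_num)]

lemma derivS1 (lam gam : ℝ) :
    deriv (fun x => fS lam gam x 0) 1 = 6 - Real.sqrt 6 * lam := by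
  unfold fS
  have h := (((((((hasDerivAt_pow 2 (1:ℝ)).const_mul 3).const_add (-1)).add_const
      (3/2*gam*0)).const_sub 2).neg.mul (hasDerivAt_id 1)).add
    ((((hasDerivAt_pow 2 (1:ℝ)).const_sub 1).sub_const 0).const_mul (Real.sqrt (3/2) * lam)))
  simp only [id_eq] at h
  refine h.deriv.trans ?_; simp only [Pi.neg_apply]; rw [sqrt6_eq]; push_cast; ring

lemma derivS2 (lam gam : ℝ) :
    deriv (fun y => fS lam gam 1 y) 0 = 3/2*gam - Real.sqrt (3/2) * lam := by
  unfold fS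
  have h := ((((((hasDerivAt_id (0:ℝ)).const_mul (3/2*gam)).const_add
      (-1 + 3*1^2)).const_sub 2).neg.mul_const 1).add
    (((hasDerivAt_id (0:ℝ)).const_sub (1 - 1^2)).const_mul (Real.sqrt (3/2) * lam)))
  simp only [id_eq] at h
  refine h.deriv.trans ?_; ring

lemma derivO1 (gam : ℝ) : deriv (fun x => fO gam x 0) 1 = 0 := by
  simp [fO]

lemma derivO2 (gam : ℝ) : deriv (fun y => fO gam 1 y) 0 = 6 - 3*gam := by
  unfold fO
  have h := (((((((hasDerivAt_id (0:ℝ)).const_mul (3/2*gam)).const_add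
      (-1 + 3*1^2)).const_add 1).const_mul 2).sub_const (3*gam)).mul (hasDerivAt_id 0))
  simp only [id_eq] at h
  refine h.deriv.trans ?_; ring

/-- The linearization at `K₊ = (1,0)` has eigenvalues `3(2-γ)` and `√6(√6-λ)`; `K₊` is an
unstable node (both positive) when `0 ≤ λ < √6`, `γ ∈ (0,2)`, and a saddle when `λ > √6`. -/
theorem stmt_14 (lam gam : ℝ) (hl : 0 ≤ lam) (hg : 0 < gam) (hg2 : gam < 2) :
    (∀ μ : ℝ, (Jac lam gam 1 0 - μ • (1 : Matrix (Fin 2) (Fin 2) ℝ)).det = 0 ↔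
      μ = 3 * (2 - gam) ∨ μ = Real.sqrt 6 * (Real.sqrt 6 - lam)) ∧
    (lam < Real.sqrt 6 → 0 < 3 * (2 - gam) ∧ 0 < Real.sqrt 6 * (Real.sqrt 6 - lam)) ∧
    (Real.sqrt 6 < lam → 0 < 3 * (2 - gam) ∧ Real.sqrt 6 * (Real.sqrt 6 - lam) < 0) := by
  have h6 : Real.sqrt 6 * Real.sqrt 6 = 6 := Real.mul_self_sqrt (by norm_num)
  have h6pos : (0:ℝ) < Real.sqrt 6 := Real.sqrt_pos.mpr (by norm_num)
  refine ⟨fun μ => ?_, fun h => ⟨by linarith, mul_pos h6pos (by linarith)⟩,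
    fun h => ⟨by linarith, mul_neg_of_pos_of_neg h6pos (by linarith)⟩⟩
  have hdet : (Jac lam gam 1 0 - μ • (1 : Matrix (Fin 2) (Fin 2) ℝ)).det =
      (6 - Real.sqrt 6 * lam - μ) * (6 - 3*gam - μ) := by
    simp [Jac, Matrix.det_fin_two, derivS1, derivS2, derivO1, derivO2, Matrix.one_apply]
  rw [hdet]
  constructor
  · intro h
    rcases mul_eq_zero.mp h with h' | h'
    · right; rw [mul_sub, h6]; linarith
    · left; linarith
  · rintro (h | h) <;> subst h
    · rw [show 6 - 3*gam - 3*(2-gam) = 0 from by ring, mul_zero]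
    · rw [show 6 - Real.sqrt 6 * lam - Real.sqrt 6*(Real.sqrt 6 - lam) = 0 from by
        rw [mul_sub, h6]; ring, zero_mul]
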